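/- Let G be a nontrivial totally ordered abelian group, let a > 0 in G, and let M_a = {0} ∪ {g ∈ G : g ≥ a}. If M_a is quasi-atomic, then every nonzero element b of M_a is Archimedean-equivalent to a, i.e., b ≤ n·a for some positive integer n. -/

import Mathlib

/-- `x` is invertible within the subset `S` of the ambient monoid. -/
def SUnit {A : Type*} [AddCommMonoid A] (S : Set A) (x : A) : Prop := ∃ y ∈ S, x + y = 0

/-- `a` is an atom of the subset (submonoid) `S`: it is non-invertible in `S` and
cannot be written as a sum of two non-invertible elements of `S`. -/
def SAtom {A : Type*} [AddCommMonoid A] (S : Set A) (a : A) : Prop :=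
  a ∈ S ∧ ¬ SUnit S a ∧ ∀ b ∈ S, ∀ c ∈ S, a = b + c → SUnit S b ∨ SUnit S c

/-- `x` is an atomic element of `S`: invertible in `S` or a finite sum of atoms of `S`. -/
def SAtomicElem {A : Type*} [AddCommMonoid A] (S : Set A) (x : A) : Prop :=
  SUnit S x ∨ ∃ l : Multiset A, (∀ a ∈ l, SAtom S a) ∧ l.sum = x

/-- The subset (submonoid) `S` is atomic. -/
def SAtomic {A : Type*} [AddCommMonoid A] (S : Set A) : Prop :=
  ∀ x ∈ S, SAtomicElem S x

/-- If the conductive positive monoid `M_a = {0} ∪ G_{≥ a}` of a nontrivial totally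
ordered abelian group is quasi-atomic, then every nonzero element of `M_a` is
Archimedean-equivalent to `a`, i.e. bounded above by a positive multiple of `a`. -/
theorem quasi_atomic_conductive_implies_archimedean {G : Type*}
    [AddCommGroup G] [LinearOrder G] [IsOrderedAddMonoid G] [Nontrivial G] (a : G) (ha : 0 < a)
    (hqa : ∀ c ∈ ({0} ∪ Set.Ici a : Set G), c ≠ 0 →
      ∃ b ∈ ({0} ∪ Set.Ici a : Set G), SAtomicElem ({0} ∪ Set.Ici a : Set G) (b + c)) :
    ∀ b ∈ ({0} ∪ Set.Ici a : Set G), b ≠ 0 → ∃ n : ℕ, 0 < n ∧ b ≤ n • a := by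
  set S : Set G := {0} ∪ Set.Ici a with hS
  have hmem : ∀ x : G, x ∈ S ↔ x = 0 ∨ a ≤ x := by
    intro x
    simp [hS, Set.mem_union, Set.mem_Ici]
  have hnonneg : ∀ x ∈ S, (0 : G) ≤ x := by
    intro x hx
    rcases (hmem x).1 hx with h | h
    · simp [h]
    · exact le_trans ha.le h
  have hnounit : ∀ x : G, 0 < x → ¬ SUnit S x := by
    rintro x hx ⟨y, hy, hxy⟩
    have : 0 < x + y := lt_of_lt_of_le hx (le_add_of_nonneg_right (hnonneg y hy))
    exact this.ne' hxy
  have hatom : ∀ x : G, SAtom S x → x ≤ a + a := by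
    intro x ⟨hxS, hxu, hxd⟩
    by_contra h
    push_neg at h
    have hxa : a ≤ x - a := le_sub_iff_add_le.2 h.le
    have h1 : a ∈ S := (hmem a).2 (Or.inr le_rfl)
    have h2 : x - a ∈ S := (hmem _).2 (Or.inr hxa)
    rcases hxd a h1 (x - a) h2 (by abel) with hu | hu
    · exact hnounit a ha hu
    · exact hnounit (x - a) (lt_of_lt_of_le ha hxa) hu
  intro b hb hb0
  obtain ⟨d, hd, hat⟩ := hqa b hb hb0
  have hba : a ≤ b := ((hmem b).1 hb).resolve_left hb0
  have hdb : 0 < d + b := lt_of_lt_of_le (lt_of_lt_of_le ha hba)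
    (le_add_of_nonneg_left (hnonneg d hd))
  rcases hat with hu | ⟨l, hl, hsum⟩
  · exact absurd hu (hnounit _ hdb)
  · refine ⟨2 * Multiset.card l, ?_, ?_⟩
    · rcases Nat.eq_zero_or_pos (Multiset.card l) with h0 | h0
      · exfalso
        rw [Multiset.card_eq_zero] at h0
        rw [h0] at hsum
        simp at hsum
        exact hdb.ne' hsum.symm
      · omega
    · have h1 : l.sum ≤ Multiset.card l • (a + a) :=
        Multiset.sum_le_card_nsmul l (a + a) (fun x hx => hatom x (hl x hx))
      have h2 : Multiset.card l • (a + a) = (2 * Multiset.card l) • a := by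
        rw [smul_add, two_mul, add_smul]
      calc b ≤ d + b := le_add_of_nonneg_left (hnonneg d hd)
        _ = l.sum := hsum.symm
        _ ≤ _ := h2 ▸ h1
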